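/- Let C and D be categories, p : E → C a Grothendieck opfibration, and suppose F₀, F₁ : C → Cat are the straightenings of opfibrations p₀ : E₀ → C and p₁ : E₁ → C, with a cocartesian functor α : E₀ → E₁ over C. Define the gluing category Glue(α) over C × [1] whose fiber over (c, 0) is E₀(c), fiber over (c, 1) is E₁(c), with morphisms from objects over (c,0) to objects over (c',1) given by morphisms in E₁ after applying α. Then the projection Glue(α) → C × [1] is a Grothendieck opfibration, and cocartesian transport along (id_c, 0 → 1) is given by α_c. -/

import Mathlib

open CategoryTheory

universe v v₃ u₁ u₂ u₃

section Defs

variable {E : Type u₁} [Category.{v} E] {C : Type u₂} [Category.{v₃} C]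

/-- A morphism `f : a ⟶ b` of `E` is cocartesian with respect to `p : E ⥤ C`. -/
def IsCocartesianMor (p : E ⥤ C) {a b : E} (f : a ⟶ b) : Prop :=
  ∀ ⦃c : E⦄ (g : a ⟶ c) (w : p.obj b ⟶ p.obj c),
    p.map g = p.map f ≫ w → ∃! h : b ⟶ c, p.map h = w ∧ f ≫ h = g

/-- `p : E ⥤ C` is a Grothendieck opfibration. -/
def IsOpfibration (p : E ⥤ C) : Prop :=
  ∀ (a : E) ⦃y : C⦄ (u : p.obj a ⟶ y),
    ∃ (b : E) (f : a ⟶ b) (hb : p.obj b = y),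
      p.map f ≫ eqToHom hb = u ∧ IsCocartesianMor p f

end Defs

section Glue

variable {E₀ : Type u₁} [Category.{v} E₀] {E₁ : Type u₂} [Category.{v} E₁]
  {C : Type u₃} [Category.{v₃} C]

/-- The underlying type of the gluing (collage) category of `α : E₀ ⥤ E₁`. -/
def Glue (_ : E₀ ⥤ E₁) : Type _ := E₀ ⊕ E₁

/-- Morphisms of the gluing category: morphisms of `E₀` and of `E₁`, and from an `E₀`-object
`e₀` to an `E₁`-object `e₁` the morphisms `α.obj e₀ ⟶ e₁` of `E₁`; no morphisms from
`E₁`-objects to `E₀`-objects. -/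
def GlueHom (α : E₀ ⥤ E₁) : Glue α → Glue α → Type v
  | Sum.inl a, Sum.inl b => a ⟶ b
  | Sum.inl a, Sum.inr b => (α.obj a ⟶ b)
  | Sum.inr _, Sum.inl _ => PEmpty
  | Sum.inr a, Sum.inr b => a ⟶ b

def GlueId (α : E₀ ⥤ E₁) : ∀ X : Glue α, GlueHom α X X
  | Sum.inl a => 𝟙 a
  | Sum.inr a => 𝟙 a

def GlueComp (α : E₀ ⥤ E₁) :
    ∀ {X Y Z : Glue α}, GlueHom α X Y → GlueHom α Y Z → GlueHom α X Z
  | Sum.inl _, Sum.inl _, Sum.inl _, f, g => f ≫ g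
  | Sum.inl _, Sum.inl _, Sum.inr _, f, g => α.map f ≫ g
  | Sum.inl _, Sum.inr _, Sum.inr _, f, g => f ≫ g
  | Sum.inr _, Sum.inr _, Sum.inr _, f, g => f ≫ g
  | Sum.inl _, Sum.inr _, Sum.inl _, _, g => PEmpty.elim g
  | Sum.inr _, Sum.inl _, _, f, _ => PEmpty.elim f
  | Sum.inr _, Sum.inr _, Sum.inl _, _, g => PEmpty.elim g

instance glueCategory (α : E₀ ⥤ E₁) : Category (Glue α) where
  Hom := GlueHom α
  id := GlueId α
  comp := GlueComp α
  id_comp {X Y} f := by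
    cases X <;> cases Y <;>
      first
        | exact PEmpty.elim f
        | (revert f; simp [GlueHom, GlueComp, GlueId])
  comp_id {X Y} f := by
    cases X <;> cases Y <;>
      first
        | exact PEmpty.elim f
        | (revert f; simp [GlueHom, GlueComp, GlueId])
  assoc {X Y Z W} f g h := by
    cases X <;> cases Y <;> cases Z <;> cases W <;>
      first
        | exact PEmpty.elim f
        | exact PEmpty.elim g
        | exact PEmpty.elim h
        | (revert f g h; simp [GlueHom, GlueComp])

theorem glue_comp_def (α : E₀ ⥤ E₁) {X Y Z : Glue α} (f : X ⟶ Y) (g : Y ⟶ Z) :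
    f ≫ g = GlueComp α f g := rfl

theorem glue_id_def (α : E₀ ⥤ E₁) (X : Glue α) : 𝟙 X = GlueId α X := rfl

theorem mapAlphaEq (p₀ : E₀ ⥤ C) (p₁ : E₁ ⥤ C) (α : E₀ ⥤ E₁) (h : α ⋙ p₁ = p₀)
    {a b : E₀} (k : a ⟶ b) :
    p₁.map (α.map k) =
      eqToHom (Functor.congr_obj h a) ≫ p₀.map k ≫ eqToHom (Functor.congr_obj h b).symm :=
  Functor.congr_hom h k

/-- The projection from the gluing category to `C × [1]` (with `[1]` realized as the
preorder `Fin 2`). -/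
def glueProj (p₀ : E₀ ⥤ C) (p₁ : E₁ ⥤ C) (α : E₀ ⥤ E₁) (h : α ⋙ p₁ = p₀) :
    Glue α ⥤ C × Fin 2 where
  obj X := match X with
    | Sum.inl a => (p₀.obj a, 0)
    | Sum.inr a => (p₁.obj a, 1)
  map {X Y} f := match X, Y, f with
    | Sum.inl _, Sum.inl _, f => (p₀.map f, 𝟙 (0 : Fin 2))
    | Sum.inl a, Sum.inr _, f =>
        (eqToHom (Functor.congr_obj h a).symm ≫ p₁.map f, homOfLE (show (0 : Fin 2) ≤ 1 by decide))
    | Sum.inr _, Sum.inr _, f => (p₁.map f, 𝟙 (1 : Fin 2))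
    | Sum.inr _, Sum.inl _, f => PEmpty.elim f
  map_id X := by
    cases X <;>
      exact Prod.ext (by first | exact p₀.map_id _ | exact p₁.map_id _) (Subsingleton.elim _ _)
  map_comp {X Y Z} f g := by
    cases X <;> cases Y <;> cases Z <;>
      first
        | exact PEmpty.elim f
        | exact PEmpty.elim g
        | skip
    · exact Prod.ext (p₀.map_comp (f : _ ⟶ _) g) (Subsingleton.elim _ _)
    · rename_i a b c
      obtain ⟨f, rfl⟩ : ∃ f' : a ⟶ b, f' = f := ⟨f, rfl⟩
      obtain ⟨g, rfl⟩ : ∃ g' : α.obj b ⟶ c, g' = g := ⟨g, rfl⟩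
      exact Prod.ext
        (show eqToHom _ ≫ p₁.map (α.map f ≫ g) =
            p₀.map f ≫ eqToHom _ ≫ p₁.map g by
          rw [p₁.map_comp, mapAlphaEq p₀ p₁ α h]; simp)
        (Subsingleton.elim _ _)
    · rename_i a b c
      obtain ⟨f, rfl⟩ : ∃ f' : α.obj a ⟶ b, f' = f := ⟨f, rfl⟩
      obtain ⟨g, rfl⟩ : ∃ g' : b ⟶ c, g' = g := ⟨g, rfl⟩
      exact Prod.ext
        (show eqToHom _ ≫ p₁.map (f ≫ g) =
            (eqToHom _ ≫ p₁.map f) ≫ p₁.map g by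
          rw [p₁.map_comp]; simp)
        (Subsingleton.elim _ _)
    · exact Prod.ext (p₁.map_comp (f : _ ⟶ _) g) (Subsingleton.elim _ _)

/-- The canonical morphism `inl e ⟶ inr (α.obj e)` of the gluing category, given by the
identity of `α.obj e`. -/
def glueUnit (α : E₀ ⥤ E₁) (e : E₀) : GlueHom α (Sum.inl e) (Sum.inr (α.obj e)) :=
  𝟙 (α.obj e)


section Aux

variable {E₀ : Type u₁} [Category.{v} E₀] {E₁ : Type u₂} [Category.{v} E₁]
  {C : Type u₃} [Category.{v₃} C]

theorem my_eqToHom_fst {C D : Type*} [Category C] [Category D] {X Y : C × D} (h : X = Y) :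
    (eqToHom h).1 = eqToHom (congrArg Prod.fst h) := by subst h; rfl

theorem prodHom_ext' {C : Type*} [Category C] {X Y : C × Fin 2} (f g : X ⟶ Y)
    (h : f.1 = g.1) : f = g := Prod.ext h (Subsingleton.elim _ _)

theorem comp_eqToHom_fst {C D : Type*} [Category C] [Category D] {X Y Z : C × D}
    (f : X ⟶ Y) (e : Y = Z) :
    (f ≫ eqToHom e).1 = f.1 ≫ eqToHom (congrArg Prod.fst e) := by
  subst e; simp

theorem eqToHom_eqToHom_cancel {C : Type*} [Category C] {X Y Z : C} (p : X = Y) (q : Y = X)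
    (k : X ⟶ Z) : eqToHom p ≫ eqToHom q ≫ k = k := by subst p; simp

theorem no_one_to_zero (f : (1 : Fin 2) ⟶ 0) : False := by
  have := leOfHom f; omega

variable (p₀ : E₀ ⥤ C) (p₁ : E₁ ⥤ C) (α : E₀ ⥤ E₁) (h : α ⋙ p₁ = p₀)

theorem glueProj_map_ll {a b : E₀} (f : a ⟶ b) :
    (glueProj p₀ p₁ α h).map (X := Sum.inl a) (Y := Sum.inl b) f
      = (p₀.map f, 𝟙 (0 : Fin 2)) := rfl

theorem glueProj_map_lr {a : E₀} {b : E₁} (f : α.obj a ⟶ b) :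
    (glueProj p₀ p₁ α h).map (X := Sum.inl a) (Y := Sum.inr b) f
      = (eqToHom (Functor.congr_obj h a).symm ≫ p₁.map f,
          homOfLE (show (0 : Fin 2) ≤ 1 by decide)) := rfl

theorem glueProj_map_rr {a b : E₁} (f : a ⟶ b) :
    (glueProj p₀ p₁ α h).map (X := Sum.inr a) (Y := Sum.inr b) f
      = (p₁.map f, 𝟙 (1 : Fin 2)) := rfl

theorem cocart_inr {a b : E₁} (f : a ⟶ b) (hf : IsCocartesianMor p₁ f) :
    IsCocartesianMor (glueProj p₀ p₁ α h) (a := Sum.inr a) (b := Sum.inr b) f := by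
  intro Z g w hw
  cases Z with
  | inl c => exact PEmpty.elim g
  | inr c =>
    have hw1 : p₁.map g = p₁.map f ≫ w.1 := by
      have := congrArg Prod.fst hw
      exact this
    obtain ⟨k, ⟨hk1, hk2⟩, hku⟩ := hf g w.1 hw1
    refine ⟨k, ⟨prodHom_ext' _ _ hk1, hk2⟩, ?_⟩
    rintro k' ⟨hk1', hk2'⟩
    exact hku k' ⟨congrArg Prod.fst hk1', hk2'⟩

theorem cocart_mixed {a : E₀} {b : E₁} (f : α.obj a ⟶ b) (hf : IsCocartesianMor p₁ f) :
    IsCocartesianMor (glueProj p₀ p₁ α h) (a := Sum.inl a) (b := Sum.inr b) f := by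
  intro Z g w hw
  cases Z with
  | inl c => exact (no_one_to_zero w.2).elim
  | inr c =>
    have hw1 : p₁.map g = p₁.map f ≫ w.1 := by
      have := congrArg Prod.fst hw
      change eqToHom _ ≫ p₁.map g = (eqToHom _ ≫ p₁.map f) ≫ w.1 at this
      simp only [Category.assoc] at this
      exact ((eqToHom_comp_iff _ _ _).mp this).trans
        ((congrArg (eqToHom _ ≫ ·) (Category.assoc _ _ _)).trans (eqToHom_eqToHom_cancel _ _ _))
    obtain ⟨k, ⟨hk1, hk2⟩, hku⟩ := hf (g : α.obj a ⟶ c) w.1 hw1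
    refine ⟨k, ⟨prodHom_ext' _ _ hk1, hk2⟩, ?_⟩
    rintro k' ⟨hk1', hk2'⟩
    exact hku k' ⟨congrArg Prod.fst hk1', hk2'⟩

theorem cocart_inl
    (hα : ∀ {a b : E₀} (f : a ⟶ b), IsCocartesianMor p₀ f → IsCocartesianMor p₁ (α.map f))
    {a b : E₀} (f : a ⟶ b) (hf : IsCocartesianMor p₀ f) :
    IsCocartesianMor (glueProj p₀ p₁ α h) (a := Sum.inl a) (b := Sum.inl b) f := by
  intro Z g w hw
  cases Z with
  | inl c =>
    have hw1 : p₀.map g = p₀.map f ≫ w.1 := by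
      exact congrArg Prod.fst hw
    obtain ⟨k, ⟨hk1, hk2⟩, hku⟩ := hf g w.1 hw1
    refine ⟨k, ⟨prodHom_ext' _ _ hk1, hk2⟩, ?_⟩
    rintro k' ⟨hk1', hk2'⟩
    exact hku k' ⟨congrArg Prod.fst hk1', hk2'⟩
  | inr c =>
    have hw1 : eqToHom (Functor.congr_obj h a).symm ≫ p₁.map g = p₀.map f ≫ w.1 := by
      exact congrArg Prod.fst hw
    have hαc := hα f hf
    have hcomp : p₁.map (g : α.obj a ⟶ c)
        = p₁.map (α.map f) ≫ (eqToHom (Functor.congr_obj h b) ≫ w.1) := by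
      rw [mapAlphaEq p₀ p₁ α h]
      simp only [Category.assoc]
      exact ((eqToHom_comp_iff _ _ _).mp hw1).trans
        (congrArg (eqToHom _ ≫ p₀.map f ≫ ·) (eqToHom_eqToHom_cancel _ _ _).symm)
    obtain ⟨k, ⟨hk1, hk2⟩, hku⟩ := hαc (g : α.obj a ⟶ c)
      (eqToHom (Functor.congr_obj h b) ≫ w.1) hcomp
    refine ⟨k, ⟨prodHom_ext' _ _ ?_, hk2⟩, ?_⟩
    · simp [glueProj_map_lr, hk1]; exact eqToHom_eqToHom_cancel _ _ _
    · rintro k' ⟨hk1', hk2'⟩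
      refine hku k' ⟨?_, hk2'⟩
      have := congrArg Prod.fst hk1'
      change eqToHom _ ≫ p₁.map k' = _ at this
      rw [← this]; simp
  
theorem id_cocart {E : Type*} [Category E] (p : E ⥤ C) (a : E) :
    IsCocartesianMor p (𝟙 a) := by
  intro c g w hw
  exact ⟨g, ⟨by simpa using hw, by simp⟩, fun k ⟨_, hk⟩ => by simpa using hk⟩

end Aux

/-- Given opfibrations `p₀ : E₀ ⥤ C` and `p₁ : E₁ ⥤ C` and a cocartesian
functor `α : E₀ ⥤ E₁` over `C`, the projection of the gluing category `Glue(α)` to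
`C × [1]` is a Grothendieck opfibration, and cocartesian transport along the arrows
`(𝟙 c, 0 ⟶ 1)` is given by `α`: for each `e : E₀`, the canonical morphism
`inl e ⟶ inr (α.obj e)` (given by `𝟙 (α.obj e)`) is cocartesian. -/
theorem stmt_8 (p₀ : E₀ ⥤ C) (p₁ : E₁ ⥤ C)
    (h₀ : IsOpfibration p₀) (h₁ : IsOpfibration p₁)
    (α : E₀ ⥤ E₁) (h : α ⋙ p₁ = p₀)
    (hα : ∀ {a b : E₀} (f : a ⟶ b), IsCocartesianMor p₀ f → IsCocartesianMor p₁ (α.map f)) :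
    IsOpfibration (glueProj p₀ p₁ α h) ∧
      ∀ e : E₀,
        IsCocartesianMor (glueProj p₀ p₁ α h)
          (a := (Sum.inl e : Glue α)) (b := (Sum.inr (α.obj e) : Glue α))
          (glueUnit α e) := by
  constructor
  · rintro X ⟨y, j⟩ u
    have hj : j = 0 ∨ j = 1 := by omega
    cases X with
    | inl a =>
      rcases hj with rfl | rfl
      · obtain ⟨b, f, hb, hcomm, hcoc⟩ := h₀ a u.1
        have key : ∀ (e : p₀.obj b = y), p₀.map f ≫ eqToHom e = u.1 := fun e => hcomm
        refine ⟨Sum.inl b, f, Prod.ext hb rfl, ?_, cocart_inl p₀ p₁ α h hα f hcoc⟩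
        refine prodHom_ext' _ _ ?_
        rw [comp_eqToHom_fst]
        exact key _
      · obtain ⟨b, f, hb, hcomm, hcoc⟩ :=
          h₁ (α.obj a) (eqToHom (Functor.congr_obj h a) ≫ u.1)
        have key : ∀ (e : p₁.obj b = y),
            (eqToHom (Functor.congr_obj h a).symm ≫ p₁.map f) ≫ eqToHom e = u.1 := by
          intro e
          rw [Category.assoc, show (eqToHom e : p₁.obj b ⟶ y) = eqToHom hb from rfl, hcomm]
          exact eqToHom_eqToHom_cancel _ _ _
        refine ⟨Sum.inr b, f, Prod.ext hb rfl, ?_, cocart_mixed p₀ p₁ α h f hcoc⟩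
        refine prodHom_ext' _ _ ?_
        rw [comp_eqToHom_fst]
        exact key _
    | inr a =>
      rcases hj with rfl | rfl
      · exact (no_one_to_zero u.2).elim
      · obtain ⟨b, f, hb, hcomm, hcoc⟩ := h₁ a u.1
        have key : ∀ (e : p₁.obj b = y), p₁.map f ≫ eqToHom e = u.1 := fun e => hcomm
        refine ⟨Sum.inr b, f, Prod.ext hb rfl, ?_, cocart_inr p₀ p₁ α h f hcoc⟩
        refine prodHom_ext' _ _ ?_
        rw [comp_eqToHom_fst]
        exact key _
  · intro e
    exact cocart_mixed p₀ p₁ α h (𝟙 (α.obj e)) (id_cocart p₁ (α.obj e))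


end Glue
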